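/- Let K be a field of characteristic not 2, a ∈ K^×, and let σ be the K-automorphism of K(x,y,z) defined by σ(x) = a/x, σ(y) = a/y, σ(z) = a/z. Then the fixed field K(x,y,z)^⟨σ⟩ equals K(k₁, k₂, k₃), where k₁ = (xy + a)/(x + y), k₂ = (yz + a)/(y + z), k₃ = (xz + a)/(x + z). In particular K(x,y,z)^⟨σ⟩ is rational over K. -/

import Mathlib

open MvPolynomial IntermediateField

private lemma mem_fixedField_zpowers_aux {K F : Type*} [Field K] [Field F] [Algebra K F]
    (σ : F ≃ₐ[K] F) (w : F) (h : σ w = w) :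
    w ∈ IntermediateField.fixedField (Subgroup.zpowers σ) := by
  rintro ⟨g, n, rfl⟩
  show (σ ^ n) w = w
  have hn : ∀ m : ℕ, (σ ^ m) w = w := by
    intro m; induction m with
    | zero => simp
    | succ m ih => rw [pow_succ, AlgEquiv.mul_apply, h, ih]
  obtain (m | m) := n
  · simpa using hn m
  · rw [zpow_negSucc]
    have hm := hn (m + 1)
    calc (σ ^ (m+1))⁻¹ w = (σ ^ (m+1))⁻¹ ((σ ^ (m+1)) w) := by rw [hm]
    _ = ((σ ^ (m+1))⁻¹ * σ ^ (m+1)) w := rfl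
    _ = w := by rw [inv_mul_cancel]; rfl

set_option maxHeartbeats 1000000 in
theorem fixed_field_neg_I3 (K F : Type*) [Field K] [Field F]
    [Algebra K F] [Algebra (MvPolynomial (Fin 3) K) F]
    [IsScalarTower K (MvPolynomial (Fin 3) K) F]
    [IsFractionRing (MvPolynomial (Fin 3) K) F]
    (h2 : (2 : K) ≠ 0) (a : K) (ha : a ≠ 0)
    (x y z : F)
    (hx : x = algebraMap (MvPolynomial (Fin 3) K) F (X 0))
    (hy : y = algebraMap (MvPolynomial (Fin 3) K) F (X 1))
    (hz : z = algebraMap (MvPolynomial (Fin 3) K) F (X 2))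
    (σ : F ≃ₐ[K] F)
    (hσx : σ x = algebraMap K F a / x)
    (hσy : σ y = algebraMap K F a / y)
    (hσz : σ z = algebraMap K F a / z) :
    fixedField (Subgroup.zpowers σ) =
      adjoin K {(x * y + algebraMap K F a) / (x + y),
                (y * z + algebraMap K F a) / (y + z),
                (x * z + algebraMap K F a) / (x + z)} := by
  have inj := IsFractionRing.injective (MvPolynomial (Fin 3) K) F
  have hne : ∀ p : MvPolynomial (Fin 3) K, ∀ v : Fin 3 → K, eval v p ≠ 0 →
      algebraMap (MvPolynomial (Fin 3) K) F p ≠ 0 := by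
    intro p v hv
    rw [Ne, map_eq_zero_iff _ inj]
    rintro rfl; simp at hv
  have hx0 : x ≠ 0 := by rw [hx]; exact hne _ ![1,0,0] (by simp)
  have hy0 : y ≠ 0 := by rw [hy]; exact hne _ ![0,1,0] (by simp)
  have hz0 : z ≠ 0 := by rw [hz]; exact hne _ ![0,0,1] (by simp)
  have hxy : x + y ≠ 0 := by rw [hx, hy, ← map_add]; exact hne _ ![1,0,0] (by simp)
  have hyz : y + z ≠ 0 := by rw [hy, hz, ← map_add]; exact hne _ ![0,1,0] (by simp)
  have hxz : x + z ≠ 0 := by rw [hx, hz, ← map_add]; exact hne _ ![1,0,0] (by simp)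
  set A := algebraMap K F a with hA
  have hAeq : A = algebraMap (MvPolynomial (Fin 3) K) F (C a) := by
    rw [hA, IsScalarTower.algebraMap_apply K (MvPolynomial (Fin 3) K) F]; rfl
  have hA0 : A ≠ 0 := by rw [hAeq]; exact hne _ 0 (by simpa using ha)
  have hx2 : x ^ 2 - A ≠ 0 := by
    rw [hx, hAeq, ← map_pow, ← map_sub]
    exact hne _ 0 (by simpa using ha)
  have hy2 : y ^ 2 - A ≠ 0 := by
    rw [hy, hAeq, ← map_pow, ← map_sub]
    exact hne _ 0 (by simpa using ha)
  have hz2 : z ^ 2 - A ≠ 0 := by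
    rw [hz, hAeq, ← map_pow, ← map_sub]
    exact hne _ 0 (by simpa using ha)
  have h2F : (2 : F) ≠ 0 := by
    have h21 : (2 : F) = algebraMap K F 2 := by rw [map_ofNat]
    rw [h21, Ne, map_eq_zero_iff _ (algebraMap K F).injective]
    exact h2
  -- σ is an involution
  have hσσ : ∀ w : F, σ (σ w) = w := by
    have key : (σ.toRingEquiv.toRingHom.comp σ.toRingEquiv.toRingHom) = RingHom.id F := by
      apply IsLocalization.ringHom_ext (nonZeroDivisors (MvPolynomial (Fin 3) K))
      apply MvPolynomial.ringHom_ext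
      · intro k
        have hck : algebraMap (MvPolynomial (Fin 3) K) F (C k) = algebraMap K F k := by
          rw [IsScalarTower.algebraMap_apply K (MvPolynomial (Fin 3) K) F]; rfl
        simp [hck, σ.commutes]
      · intro i
        fin_cases i
        · show σ (σ (algebraMap (MvPolynomial (Fin 3) K) F (X 0))) =
            algebraMap (MvPolynomial (Fin 3) K) F (X 0)
          rw [← hx, hσx, map_div₀, σ.commutes, ← hA, hσx]
          field_simp
        · show σ (σ (algebraMap (MvPolynomial (Fin 3) K) F (X 1))) =
            algebraMap (MvPolynomial (Fin 3) K) F (X 1)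
          rw [← hy, hσy, map_div₀, σ.commutes, ← hA, hσy]
          field_simp
        · show σ (σ (algebraMap (MvPolynomial (Fin 3) K) F (X 2))) =
            algebraMap (MvPolynomial (Fin 3) K) F (X 2)
          rw [← hz, hσz, map_div₀, σ.commutes, ← hA, hσz]
          field_simp
    intro w
    exact RingHom.congr_fun key w
  have hσ2 : σ ^ 2 = 1 := by
    rw [pow_two]; exact AlgEquiv.ext fun w => hσσ w
  have hσ1 : σ ≠ 1 := by
    intro h
    apply hx2
    have hxx : σ x = x := by rw [h]; rfl
    rw [hσx, div_eq_iff hx0] at hxx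
    linear_combination -hxx
  -- the generators
  set k₁ := (x * y + A) / (x + y) with hk₁
  set k₂ := (y * z + A) / (y + z) with hk₂
  set k₃ := (x * z + A) / (x + z) with hk₃
  set L : IntermediateField K F := adjoin K {k₁, k₂, k₃} with hL
  have hk1L : k₁ ∈ L := subset_adjoin K _ (by simp)
  have hk2L : k₂ ∈ L := subset_adjoin K _ (by simp)
  have hk3L : k₃ ∈ L := subset_adjoin K _ (by simp)
  have hAL : A ∈ L := L.algebraMap_mem a
  -- σ fixes the generators
  have hσk₁ : σ k₁ = k₁ := by
    rw [hk₁, map_div₀, map_add, map_add, map_mul, hσx, hσy, hA, σ.commutes, ← hA]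
    rw [div_eq_div_iff (show A / x + A / y ≠ 0 by
      have he : A / x + A / y = A * (x + y) / (x * y) := by field_simp; ring
      rw [he]; exact div_ne_zero (mul_ne_zero hA0 hxy) (mul_ne_zero hx0 hy0)) hxy]
    field_simp
    ring
  have hσk₂ : σ k₂ = k₂ := by
    rw [hk₂, map_div₀, map_add, map_add, map_mul, hσy, hσz, hA, σ.commutes, ← hA]
    rw [div_eq_div_iff (show A / y + A / z ≠ 0 by
      have he : A / y + A / z = A * (y + z) / (y * z) := by field_simp; ring
      rw [he]; exact div_ne_zero (mul_ne_zero hA0 hyz) (mul_ne_zero hy0 hz0)) hyz]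
    field_simp
    ring
  have hσk₃ : σ k₃ = k₃ := by
    rw [hk₃, map_div₀, map_add, map_add, map_mul, hσx, hσz, hA, σ.commutes, ← hA]
    rw [div_eq_div_iff (show A / x + A / z ≠ 0 by
      have he : A / x + A / z = A * (x + z) / (x * z) := by field_simp; ring
      rw [he]; exact div_ne_zero (mul_ne_zero hA0 hxz) (mul_ne_zero hx0 hz0)) hxz]
    field_simp
    ring
  have hle : L ≤ fixedField (Subgroup.zpowers σ) := by
    rw [hL, adjoin_le_iff]
    rintro w hw
    simp only [Set.mem_insert_iff, Set.mem_singleton_iff] at hw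
    rcases hw with rfl | rfl | rfl
    · exact mem_fixedField_zpowers_aux σ _ hσk₁
    · exact mem_fixedField_zpowers_aux σ _ hσk₂
    · exact mem_fixedField_zpowers_aux σ _ hσk₃
  -- the quadratic relation
  set c := k₁ * k₃ + A - k₂ * (k₁ + k₃) with hc
  set b := 2 * (k₂ * (A + k₁ * k₃) - A * (k₁ + k₃)) with hb
  have hD : (x + y) * ((y + z) * (x + z)) ≠ 0 := mul_ne_zero hxy (mul_ne_zero hyz hxz)
  have hcalt : c = -(2 * x * (y ^ 2 - A) * (z ^ 2 - A)) / ((x + y) * ((y + z) * (x + z))) := by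
    rw [eq_div_iff hD, hc, hk₁, hk₂, hk₃]; field_simp; ring
  have hbalt : b = 2 * (x ^ 2 + A) * (y ^ 2 - A) * (z ^ 2 - A) /
      ((x + y) * ((y + z) * (x + z))) := by
    rw [eq_div_iff hD, hb, hk₁, hk₂, hk₃]; field_simp; ring
  have hroot : c * x ^ 2 + b * x + A * c = 0 := by
    rw [hcalt, hbalt]; field_simp; ring
  have hc0 : c ≠ 0 := by
    rw [hcalt]
    exact div_ne_zero (neg_ne_zero.2 (mul_ne_zero (mul_ne_zero (mul_ne_zero h2F hx0) hy2) hz2)) hD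
  have hcL : c ∈ L := sub_mem (add_mem (mul_mem hk1L hk3L) hAL) (mul_mem hk2L (add_mem hk1L hk3L))
  have hbL : b ∈ L := by
    refine mul_mem ?_ (sub_mem (mul_mem hk2L (add_mem hAL (mul_mem hk1L hk3L)))
      (mul_mem hAL (add_mem hk1L hk3L)))
    have h211 : (2 : F) = 1 + 1 := by norm_num
    rw [h211]; exact add_mem L.one_mem L.one_mem
  set p : Polynomial L := Polynomial.C ⟨c, hcL⟩ * Polynomial.X ^ 2 +
    Polynomial.C ⟨b, hbL⟩ * Polynomial.X + Polynomial.C ⟨A * c, mul_mem hAL hcL⟩ with hp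
  have hp0 : p ≠ 0 := by
    intro h
    have hco := congrArg (fun q => Polynomial.coeff q 2) h
    simp [hp] at hco
    exact hc0 (congrArg Subtype.val hco)
  have haev : Polynomial.aeval x p = 0 := by
    rw [hp]
    set_option synthInstance.maxHeartbeats 400000 in
    simp only [map_add, map_mul, map_pow, Polynomial.aeval_C, Polynomial.aeval_X]
    have e1 : (algebraMap L F) ⟨c, hcL⟩ = c := rfl
    have e2 : (algebraMap L F) ⟨b, hbL⟩ = b := rfl
    have e3 : (algebraMap L F) ⟨A * c, mul_mem hAL hcL⟩ = A * c := rfl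
    rw [e1, e2, e3, ← hroot]
  have halg : IsAlgebraic L x := ⟨p, hp0, haev⟩
  have hxint : IsIntegral L x := halg.isIntegral
  have hdeg : (minpoly L x).natDegree ≤ 2 := by
    have hd1 := minpoly.degree_le_of_ne_zero L x hp0 haev
    have hd2 : p.degree ≤ 2 := Polynomial.degree_quadratic_le
    exact Polynomial.natDegree_le_iff_degree_le.2 (hd1.trans hd2)
  -- y and z lie in L(x)
  have hk1x : k₁ - x ≠ 0 := by
    have he : k₁ - x = (A - x ^ 2) / (x + y) := by rw [hk₁]; field_simp; ring
    rw [he]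
    exact div_ne_zero (fun h => hx2 (by linear_combination -h)) hxy
  have hk3x : k₃ - x ≠ 0 := by
    have he : k₃ - x = (A - x ^ 2) / (x + z) := by rw [hk₃]; field_simp; ring
    rw [he]
    exact div_ne_zero (fun h => hx2 (by linear_combination -h)) hxz
  have hyform : y = (A - k₁ * x) / (k₁ - x) := by
    rw [eq_div_iff hk1x, hk₁]; field_simp; ring
  have hzform : z = (A - k₃ * x) / (k₃ - x) := by
    rw [eq_div_iff hk3x, hk₃]; field_simp; ring
  -- any intermediate field containing x, y, z is everything
  have htop : ∀ T : IntermediateField K F, x ∈ T → y ∈ T → z ∈ T → T = ⊤ := by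
    intro T hxT hyT hzT
    rw [eq_top_iff]
    intro w _
    obtain ⟨p', q', -, rfl⟩ := IsFractionRing.div_surjective (A := MvPolynomial (Fin 3) K) w
    have key : ∀ r : MvPolynomial (Fin 3) K, algebraMap (MvPolynomial (Fin 3) K) F r ∈ T := by
      intro r
      induction r using MvPolynomial.induction_on with
      | C k =>
          have hck : algebraMap (MvPolynomial (Fin 3) K) F (C k) = algebraMap K F k := by
            rw [IsScalarTower.algebraMap_apply K (MvPolynomial (Fin 3) K) F]; rfl
          rw [hck]; exact T.algebraMap_mem k
      | add p q hpm hqm => rw [map_add]; exact T.add_mem hpm hqm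
      | mul_X p i hpm =>
          rw [map_mul]
          refine T.mul_mem hpm ?_
          fin_cases i
          · exact hx ▸ hxT
          · exact hy ▸ hyT
          · exact hz ▸ hzT
    exact T.div_mem (key p') (key q')
  -- L(x) = F
  have hadj : adjoin L {x} = ⊤ := by
    apply restrictScalars_injective K
    rw [restrictScalars_top]
    have hxmem : x ∈ (adjoin L {x}).restrictScalars K := by
      rw [mem_restrictScalars]; exact subset_adjoin L _ rfl
    have hmemL : ∀ w ∈ L, w ∈ (adjoin L {x}).restrictScalars K := by
      intro w hw
      rw [mem_restrictScalars]
      exact (adjoin L {x}).algebraMap_mem ⟨w, hw⟩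
    apply htop
    · exact hxmem
    · rw [hyform]
      exact div_mem (sub_mem (hmemL A hAL) (mul_mem (hmemL k₁ hk1L) hxmem))
        (sub_mem (hmemL k₁ hk1L) hxmem)
    · rw [hzform]
      exact div_mem (sub_mem (hmemL A hAL) (mul_mem (hmemL k₃ hk3L) hxmem))
        (sub_mem (hmemL k₃ hk3L) hxmem)
  haveI hfd : FiniteDimensional L F := by
    have h1 : FiniteDimensional L (adjoin L {x}) := adjoin.finiteDimensional hxint
    rw [hadj] at h1
    exact Module.Finite.equiv (IntermediateField.topEquiv (F := L) (E := F)).toLinearEquiv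
  have hfr : Module.finrank L F ≤ 2 := by
    have h1 : Module.finrank L (adjoin L {x}) = (minpoly L x).natDegree := adjoin.finrank hxint
    rw [hadj, finrank_top'] at h1
    rw [h1]; exact hdeg
  -- finish by a dimension count
  have horder : orderOf σ = 2 := orderOf_eq_prime hσ2 hσ1
  have hfin : Finite (Subgroup.zpowers σ) := by
    have hfo : IsOfFinOrder σ := by rw [← orderOf_pos_iff, horder]; norm_num
    exact hfo.finite_zpowers
  haveI := Fintype.ofFinite (Subgroup.zpowers σ)
  haveI : FaithfulSMul (Subgroup.zpowers σ) F := by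
    constructor
    intro g₁ g₂ h
    exact Subtype.ext (AlgEquiv.ext h)
  have hcard : Fintype.card (Subgroup.zpowers σ) = 2 := by
    rw [← Nat.card_eq_fintype_card, Nat.card_zpowers, horder]
  have hffr : Module.finrank (fixedField (Subgroup.zpowers σ)) F = 2 := by
    have h := FixedPoints.finrank_eq_card (Subgroup.zpowers σ) F
    rw [hcard] at h
    exact h
  exact (IntermediateField.eq_of_le_of_finrank_le' hle (by rw [hffr]; exact hfr)).symm
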